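/- Let T ∈ G_γ^d with γ strictly positive, non-increasing with limit zero, summable, and γ_1 = 1, and let φ ∈ F_β^r with β non-decreasing, β_1 = 1, and 1/β converging to zero. Let φ_m be the Galerkin solution of g = Tφ. Then for all m ∈ ℕ: ‖φ_m‖_β² ≤ 34·d⁸·r and ‖T^{1/2}(φ − φ_m)‖² ≤ 34·d⁹·r·γ_m/β_m, where T^{1/2} is the positive square root of T and ‖h‖_β² := Σ_j β_j⟨h,ψ_j⟩². -/

import Mathlib

open scoped RealInnerProductSpace Classical ENNReal NNReal
open Matrix MeasureTheory

noncomputable section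

variable {H : Type} [NormedAddCommGroup H] [InnerProductSpace ℝ H] [CompleteSpace H]

/-- Spectral norm of a real matrix (largest singular value). -/
def specNorm {m : ℕ} (A : Matrix (Fin m) (Fin m) ℝ) : ℝ :=
  ‖Matrix.toEuclideanCLM (𝕜 := ℝ) A‖

/-- Galerkin matrix `[T]_m = (⟪ψ_j, T ψ_k⟫)_{1≤j,k≤m}` (0-indexed). -/
def opMat (ψ : HilbertBasis ℕ ℝ H) (T : H →L[ℝ] H) (m : ℕ) :
    Matrix (Fin m) (Fin m) ℝ :=
  Matrix.of fun j k => ⟪ψ (j : ℕ), T (ψ (k : ℕ))⟫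

/-- The ellipsoid `F_β^r`. -/
def memF (ψ : HilbertBasis ℕ ℝ H) (β : ℕ → ℝ) (r : ℝ) (h : H) : Prop :=
  Summable (fun j => β j * ⟪h, ψ j⟫ ^ 2) ∧ (∑' j, β j * ⟪h, ψ j⟫ ^ 2) ≤ r

/-- The class `G_γ^d` of strictly positive nuclear operators with sandwiched norm. -/
def memG (ψ : HilbertBasis ℕ ℝ H) (γ : ℕ → ℝ) (d : ℝ) (T : H →L[ℝ] H) : Prop :=
  (∀ x y : H, ⟪T x, y⟫ = ⟪x, T y⟫) ∧ (∀ h : H, h ≠ 0 → 0 < ⟪T h, h⟫) ∧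
    Summable (fun j => ⟪T (ψ j), ψ j⟫) ∧
    ∀ h : H,
      (d ^ 2)⁻¹ * (∑' j, γ j ^ 2 * ⟪h, ψ j⟫ ^ 2) ≤ ‖T h‖ ^ 2 ∧
      ‖T h‖ ^ 2 ≤ d ^ 2 * (∑' j, γ j ^ 2 * ⟪h, ψ j⟫ ^ 2)

/-- Coefficient vector `[g]_m` of `g = Γ φ`. -/
def gvec (ψ : HilbertBasis ℕ ℝ H) (Γ : H →L[ℝ] H) (φ : H) (m : ℕ) : Fin m → ℝ :=
  fun j => ⟪Γ φ, ψ (j : ℕ)⟫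

/-- Coefficients `[Γ]_m⁻¹ [g]_m` of the Galerkin solution. -/
def galCoef (ψ : HilbertBasis ℕ ℝ H) (Γ : H →L[ℝ] H) (φ : H) (m : ℕ) : Fin m → ℝ :=
  (opMat ψ Γ m)⁻¹ *ᵥ gvec ψ Γ φ m

/-- The Galerkin solution `φ_m`. -/
def galerkin (ψ : HilbertBasis ℕ ℝ H) (Γ : H →L[ℝ] H) (φ : H) (m : ℕ) : H :=
  ∑ j : Fin m, galCoef ψ Γ φ m j • (ψ (j : ℕ))

/-- The linear functional `ℓ(h) = Σ_j ℓ_j ⟨h, ψ_j⟩`. -/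
def ellOf (ψ : HilbertBasis ℕ ℝ H) (lc : ℕ → ℝ) (h : H) : ℝ := ∑' j, lc j * ⟪h, ψ j⟫

/-- `[ℓ]_m`. -/
def ellvec (lc : ℕ → ℝ) (m : ℕ) : Fin m → ℝ := fun j => lc (j : ℕ)

/-- Weighted (squared) norm `‖h‖_w²`. -/
def wnorm2 (ψ : HilbertBasis ℕ ℝ H) (w : ℕ → ℝ) (h : H) : ℝ := ∑' j, w j * ⟪h, ψ j⟫ ^ 2

/-- `V_m^γ = Σ_{j=1}^m ℓ_j²/γ_j`. -/
def Vgam (lc γ : ℕ → ℝ) (m : ℕ) : ℝ := ∑ j ∈ Finset.range m, lc j ^ 2 / γ j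

/-- `V_m = max_{1≤k≤m} [ℓ]_k^t [Γ]_k⁻¹ [ℓ]_k`. -/
def Vmax (ψ : HilbertBasis ℕ ℝ H) (lc : ℕ → ℝ) (Γ : H →L[ℝ] H) (m : ℕ) : ℝ :=
  ⨆ k : Fin m, ellvec lc (k + 1) ⬝ᵥ ((opMat ψ Γ (k + 1))⁻¹ *ᵥ ellvec lc (k + 1))

/-- `σ_m² = 2(σ_Y² + [g]_m^t [Γ]_m⁻¹ [g]_m)` with `σ_Y² = σ² + ⟨Γφ,φ⟩`. -/
def sigmaSqm (ψ : HilbertBasis ℕ ℝ H) (Γ : H →L[ℝ] H) (φ : H) (σ : ℝ) (m : ℕ) : ℝ :=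
  2 * ((σ ^ 2 + ⟪Γ φ, φ⟫) + gvec ψ Γ φ m ⬝ᵥ ((opMat ψ Γ m)⁻¹ *ᵥ gvec ψ Γ φ m))

/-- Theoretical penalty `p_m = 100 σ_m² V_m (1 + log n)/n`. -/
def penTheo (ψ : HilbertBasis ℕ ℝ H) (lc : ℕ → ℝ) (Γ : H →L[ℝ] H) (φ : H) (σ : ℝ)
    (n m : ℕ) : ℝ :=
  100 * sigmaSqm ψ Γ φ σ m * Vmax ψ lc Γ m * ((1 + Real.log n) / n)

/-- `R_m^ℓ[x]` (here `m ≥ 1`; 0-indexed sequences, so `γ_m` is `γ (m-1)`). -/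
def Rml (lc β γ : ℕ → ℝ) (x : ℝ) (m : ℕ) : ℝ :=
  max (∑' j, if m ≤ j then lc j ^ 2 / β j else 0)
    (max (γ (m - 1) / β (m - 1)) x * ∑ j ∈ Finset.range m, lc j ^ 2 / γ j)

/-- `R_*^ℓ[x] = min_{m ≥ 1} R_m^ℓ[x]`. -/
def Rstar (lc β γ : ℕ → ℝ) (x : ℝ) : ℝ := ⨅ m : ℕ, Rml lc β γ x (m + 1)

variable {Ω : Type}

/-- Empirical covariance matrix `[Γ̂]_m`. -/
def hatGam (ψ : HilbertBasis ℕ ℝ H) (n : ℕ) (X : Fin n → Ω → H) (m : ℕ) (ω : Ω) :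
    Matrix (Fin m) (Fin m) ℝ :=
  Matrix.of fun j k => (n : ℝ)⁻¹ * ∑ i, ⟪X i ω, ψ (j : ℕ)⟫ * ⟪X i ω, ψ (k : ℕ)⟫

/-- Empirical vector `[ĝ]_m`. -/
def hatgv (ψ : HilbertBasis ℕ ℝ H) (n : ℕ) (X : Fin n → Ω → H) (Y : Fin n → Ω → ℝ)
    (m : ℕ) (ω : Ω) : Fin m → ℝ :=
  fun j => (n : ℝ)⁻¹ * ∑ i, Y i ω * ⟪X i ω, ψ (j : ℕ)⟫

/-- The thresholded plug-in estimator `ℓ̂_m = ℓ(φ̂_m)`. -/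
def hatell (ψ : HilbertBasis ℕ ℝ H) (lc : ℕ → ℝ) (n : ℕ) (X : Fin n → Ω → H)
    (Y : Fin n → Ω → ℝ) (m : ℕ) (ω : Ω) : ℝ :=
  if IsUnit (hatGam ψ n X m ω).det ∧ specNorm (hatGam ψ n X m ω)⁻¹ ≤ (n : ℝ) then
    ellvec lc m ⬝ᵥ ((hatGam ψ n X m ω)⁻¹ *ᵥ hatgv ψ n X Y m ω)
  else 0

/-- `M_n^ℓ`. -/
def Mln (lc : ℕ → ℝ) (n : ℕ) : ℕ :=
  sSup {m | 1 ≤ m ∧ (m : ℝ) ≤ (n : ℝ) ^ ((1 : ℝ) / 4) ∧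
    (∑ j ∈ Finset.range m, lc j ^ 2) ≤ (n : ℝ)}

/-- Spectral norm of the inverse, `+∞` if singular. -/
def invNormE {m : ℕ} (A : Matrix (Fin m) (Fin m) ℝ) : ℝ≥0∞ :=
  if IsUnit A.det then ENNReal.ofReal (specNorm A⁻¹) else ⊤

/-- Random upper bound `M̂_n`. -/
def Mhat (ψ : HilbertBasis ℕ ℝ H) (lc : ℕ → ℝ) (n : ℕ) (X : Fin n → Ω → H) (ω : Ω) : ℕ :=
  let S := {m | 2 ≤ m ∧ m ≤ Mln lc n ∧
    ENNReal.ofReal ((n : ℝ) / (1 + Real.log n)) <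
      invNormE (hatGam ψ n X m ω) * ENNReal.ofReal (∑ j ∈ Finset.range m, lc j ^ 2)}
  if S.Nonempty then sInf S - 1 else Mln lc n

/-- Deterministic `M_n(a)` (with `a_m = a (m-1)` in 0-indexing). -/
def Mna (lc a : ℕ → ℝ) (n : ℕ) : ℕ :=
  let S := {m | 2 ≤ m ∧ m ≤ Mln lc n ∧
    (n : ℝ) / (1 + Real.log n) < a (m - 1) * ∑ j ∈ Finset.range m, lc j ^ 2}
  if S.Nonempty then sInf S - 1 else Mln lc n

/-- `V̂_m = max_{1≤k≤m} [ℓ]_k^t [Γ̂]_k⁻¹ [ℓ]_k`. -/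
def hatVmax (ψ : HilbertBasis ℕ ℝ H) (lc : ℕ → ℝ) (n : ℕ) (X : Fin n → Ω → H)
    (m : ℕ) (ω : Ω) : ℝ :=
  ⨆ k : Fin m, ellvec lc (k + 1) ⬝ᵥ ((hatGam ψ n X (k + 1) ω)⁻¹ *ᵥ ellvec lc (k + 1))

/-- Stochastic penalty `p̂_m`. -/
def hatpen (ψ : HilbertBasis ℕ ℝ H) (lc : ℕ → ℝ) (n : ℕ) (X : Fin n → Ω → H)
    (Y : Fin n → Ω → ℝ) (m : ℕ) (ω : Ω) : ℝ :=
  700 * (2 * (n : ℝ)⁻¹ * ∑ i, (Y i ω) ^ 2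
      + 2 * (hatgv ψ n X Y m ω ⬝ᵥ ((hatGam ψ n X m ω)⁻¹ *ᵥ hatgv ψ n X Y m ω)))
    * hatVmax ψ lc n X m ω * ((1 + Real.log n) / n)

/-- Contrast `κ_m`. -/
def contrast (ψ : HilbertBasis ℕ ℝ H) (lc : ℕ → ℝ) (n : ℕ) (X : Fin n → Ω → H)
    (Y : Fin n → Ω → ℝ) (m : ℕ) (ω : Ω) : ℝ :=
  sSup {x | ∃ k, m ≤ k ∧ k ≤ Mhat ψ lc n X ω ∧
    x = (hatell ψ lc n X Y k ω - hatell ψ lc n X Y m ω) ^ 2 - hatpen ψ lc n X Y k ω}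

/-- The fully data-driven dimension `m̂` (smallest minimizer of `κ + p̂`). -/
def mhat (ψ : HilbertBasis ℕ ℝ H) (lc : ℕ → ℝ) (n : ℕ) (X : Fin n → Ω → H)
    (Y : Fin n → Ω → ℝ) (ω : Ω) : ℕ :=
  sInf {m | 1 ≤ m ∧ m ≤ Mhat ψ lc n X ω ∧ ∀ k, 1 ≤ k → k ≤ Mhat ψ lc n X ω →
    contrast ψ lc n X Y m ω + hatpen ψ lc n X Y m ω ≤
      contrast ψ lc n X Y k ω + hatpen ψ lc n X Y k ω}

/-- The functional linear model with jointly Gaussian regressor and error,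
observed through an i.i.d. sample of size `n`. -/
structure FLModel [MeasurableSpace H] (ψ : HilbertBasis ℕ ℝ H)
    (σ : ℝ) (φ : H) (Γ : H →L[ℝ] H)
    [MeasurableSpace Ω] (P : Measure Ω) (n : ℕ)
    (X : Fin n → Ω → H) (Y : Fin n → Ω → ℝ) (ε : Fin n → Ω → ℝ) : Prop where
  measX : ∀ i, Measurable (X i)
  measEps : ∀ i, Measurable (ε i)
  modelEq : ∀ i ω, Y i ω = ⟪φ, X i ω⟫ + σ * ε i ω
  indep : ProbabilityTheory.iIndepFun (fun i ω => (X i ω, ε i ω)) P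
  identDistrib : ∀ i j, Measure.map (fun ω => (X i ω, ε i ω)) P
      = Measure.map (fun ω => (X j ω, ε j ω)) P
  centeredX : ∀ i (h : H), ∫ ω, ⟪X i ω, h⟫ ∂P = 0
  sqIntX : ∀ i, Integrable (fun ω => ‖X i ω‖ ^ 2) P
  epsMean : ∀ i, ∫ ω, ε i ω ∂P = 0
  epsVar : ∀ i, ∫ ω, (ε i ω) ^ 2 ∂P = 1
  uncorr : ∀ i (h : H), ∫ ω, ε i ω * ⟪X i ω, h⟫ ∂P = 0
  gaussian : ∀ i (k : ℕ) (hs : Fin k → H) (c : Fin k → ℝ) (c' : ℝ), ∃ v : NNReal,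
      Measure.map (fun ω => (∑ j, c j * ⟪X i ω, hs j⟫) + c' * ε i ω) P
        = ProbabilityTheory.gaussianReal 0 v
  covOp : ∀ i (h h' : H), ⟪Γ h, h'⟫ = ∫ ω, ⟪X i ω, h⟫ * ⟪X i ω, h'⟫ ∂P

/-- generalized Cauchy-Schwarz for a positive symmetric operator -/
lemma gen_cs (P : H →L[ℝ] H) (hsymm : ∀ x y : H, ⟪P x, y⟫ = ⟪x, P y⟫)
    (hpos : ∀ x : H, 0 ≤ ⟪P x, x⟫) (x y : H) :
    ⟪P x, y⟫ ^ 2 ≤ ⟪P x, x⟫ * ⟪P y, y⟫ := by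
  have key : ∀ τ : ℝ, 0 ≤ ⟪P y, y⟫ * (τ * τ) + (2 * ⟪P x, y⟫) * τ + ⟪P x, x⟫ := by
    intro τ
    have h0 := hpos (x + τ • y)
    have hyx : ⟪P y, x⟫ = ⟪P x, y⟫ := by
      rw [hsymm y x, real_inner_comm]
    have : ⟪P (x + τ • y), x + τ • y⟫
        = ⟪P y, y⟫ * (τ * τ) + (2 * ⟪P x, y⟫) * τ + ⟪P x, x⟫ := by
      rw [_root_.map_add, _root_.map_smul]
      simp [inner_add_add_self, inner_add_left, inner_add_right, real_inner_smul_left,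
        real_inner_smul_right, hyx]
      ring
    rw [this] at h0
    exact h0
  have := discrim_le_zero key
  rw [discrim] at this
  nlinarith [this]

set_option maxHeartbeats 1600000 in
/-- If `‖Bx‖ ≤ ‖Ax‖` for all `x`, `A` positive symmetric, `B` symmetric, then
`⟪Bx,x⟫ ≤ ⟪Ax,x⟫` (operator square-root monotonicity in quadratic-form guise). -/
lemma form_mono (A B : H →L[ℝ] H)
    (hA : ∀ x y : H, ⟪A x, y⟫ = ⟪x, A y⟫) (hB : ∀ x y : H, ⟪B x, y⟫ = ⟪x, B y⟫)
    (hApos : ∀ x : H, 0 ≤ ⟪A x, x⟫) (hle : ∀ x : H, ‖B x‖ ≤ ‖A x‖) :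
    ∀ x : H, ⟪B x, x⟫ ≤ ⟪A x, x⟫ := by
  by_contra hcon
  push_neg at hcon
  obtain ⟨x₀, hx₀⟩ := hcon
  set C : H →L[ℝ] H := B - A with hCdef
  have hCapp : ∀ x : H, C x = B x - A x := fun x => rfl
  have hCsymm : ∀ x y : H, ⟪C x, y⟫ = ⟪x, C y⟫ := by
    intro x y; simp [hCapp, inner_sub_left, inner_sub_right, hA, hB]
  have hCBA : ∀ x : H, B x = A x + C x := by intro x; rw [hCapp]; abel
  clear_value C
  clear hCdef
  have hx0ne : x₀ ≠ 0 := by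
    rintro rfl; simp at hx₀
  -- the set of Rayleigh quotients of C on the unit sphere
  set Sset : Set ℝ := {t : ℝ | ∃ x : H, ‖x‖ = 1 ∧ t = ⟪C x, x⟫} with hSdef
  have hbdd : BddAbove Sset := by
    refine ⟨‖C‖, ?_⟩
    rintro t ⟨x, hx, rfl⟩
    calc ⟪C x, x⟫ ≤ ‖C x‖ * ‖x‖ := real_inner_le_norm _ _
      _ ≤ ‖C‖ * ‖x‖ * ‖x‖ := by
          have := C.le_opNorm x
          nlinarith [norm_nonneg x]
      _ = ‖C‖ := by rw [hx]; ring
  have hxhat : ‖(‖x₀‖⁻¹ • x₀ : H)‖ = 1 := norm_smul_inv_norm hx0ne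
  have hmem : ⟪C (‖x₀‖⁻¹ • x₀), (‖x₀‖⁻¹ • x₀)⟫ ∈ Sset := ⟨_, hxhat, rfl⟩
  have hne : Sset.Nonempty := ⟨_, hmem⟩
  set s : ℝ := sSup Sset with hsdef
  have hCx₀ : 0 < ⟪C x₀, x₀⟫ := by
    have : ⟪C x₀, x₀⟫ = ⟪B x₀, x₀⟫ - ⟪A x₀, x₀⟫ := by
      simp [hCapp, inner_sub_left]
    linarith
  have hspos : 0 < s := by
    have hval : ⟪C (‖x₀‖⁻¹ • x₀), (‖x₀‖⁻¹ • x₀)⟫ = (‖x₀‖⁻¹)^2 * ⟪C x₀, x₀⟫ := by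
      rw [_root_.map_smul]
      simp [real_inner_smul_left, real_inner_smul_right]
      ring
    have h1 : 0 < ⟪C (‖x₀‖⁻¹ • x₀), (‖x₀‖⁻¹ • x₀)⟫ := by
      rw [hval]
      have h0 : 0 < ‖x₀‖⁻¹ := by
        simp only [inv_pos]
        exact norm_pos_iff.mpr hx0ne
      exact mul_pos (pow_pos h0 2) hCx₀
    exact lt_of_lt_of_le h1 (le_csSup hbdd hmem)
  set t : ℝ := ‖C‖ with htdef
  set P : H →L[ℝ] H := C + t • (ContinuousLinearMap.id ℝ H) with hPdef
  have hPapp : ∀ x : H, P x = C x + t • x := fun x => rfl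
  have hPsymm : ∀ x y : H, ⟪P x, y⟫ = ⟪x, P y⟫ := by
    intro x y
    simp [hPapp, inner_add_left, inner_add_right, real_inner_smul_left,
      real_inner_smul_right, hCsymm]
  clear_value P
  clear hPdef
  have hCabs : ∀ x : H, |⟪C x, x⟫| ≤ t * ‖x‖ ^ 2 := by
    intro x
    calc |⟪C x, x⟫| ≤ ‖C x‖ * ‖x‖ := abs_real_inner_le_norm _ _
      _ ≤ t * ‖x‖ ^ 2 := by
          have := C.le_opNorm x
          nlinarith [norm_nonneg x]
  have hPpos : ∀ x : H, 0 ≤ ⟪P x, x⟫ := by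
    intro x
    have h1 := hCabs x
    have : ⟪P x, x⟫ = ⟪C x, x⟫ + t * ‖x‖ ^ 2 := by
      simp [hPapp, inner_add_left, real_inner_smul_left, real_inner_self_eq_norm_sq]
    rw [this]
    have := abs_le.mp h1
    linarith [this.1]
  set ν : ℝ := s + t with hνdef
  have htnn : 0 ≤ t := norm_nonneg _
  have hνpos : 0 < ν := by positivity
  have hPform : ∀ y : H, ⟪P y, y⟫ ≤ ν * ‖y‖ ^ 2 := by
    intro y
    rcases eq_or_ne y 0 with rfl | hy
    · simp
    · have hyhat : ‖(‖y‖⁻¹ • y : H)‖ = 1 := norm_smul_inv_norm hy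
      have hmem' : ⟪C (‖y‖⁻¹ • y), (‖y‖⁻¹ • y)⟫ ∈ Sset := ⟨_, hyhat, rfl⟩
      have hle' : ⟪C (‖y‖⁻¹ • y), (‖y‖⁻¹ • y)⟫ ≤ s := le_csSup hbdd hmem'
      have hval : ⟪C (‖y‖⁻¹ • y), (‖y‖⁻¹ • y)⟫ = (‖y‖⁻¹)^2 * ⟪C y, y⟫ := by
        rw [_root_.map_smul]
        simp [real_inner_smul_left, real_inner_smul_right]
        ring
      have hyn : 0 < ‖y‖ := norm_pos_iff.mpr hy
      have hCy : ⟪C y, y⟫ ≤ s * ‖y‖ ^ 2 := by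
        rw [hval] at hle'
        have h3 : ⟪C y, y⟫ = ‖y‖^2 * ((‖y‖⁻¹)^2 * ⟪C y, y⟫) := by
          field_simp
        rw [h3, mul_comm (s) (‖y‖^2)]
        exact mul_le_mul_of_nonneg_left hle' (sq_nonneg _)
      have : ⟪P y, y⟫ = ⟪C y, y⟫ + t * ‖y‖ ^ 2 := by
        simp [hPapp, inner_add_left, real_inner_smul_left, real_inner_self_eq_norm_sq]
      rw [this, hνdef]
      nlinarith [sq_nonneg ‖y‖]
  have hPnorm : ∀ x : H, ‖P x‖ ≤ ν * ‖x‖ := by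
    intro x
    rcases eq_or_ne (P x) 0 with hPx | hPx
    · rw [hPx]; simp; positivity
    · have hcs := gen_cs P hPsymm hPpos x (P x)
      have h1 : ⟪P x, P x⟫ = ‖P x‖ ^ 2 := real_inner_self_eq_norm_sq _
      have h2 : ⟪P x, x⟫ ≤ ν * ‖x‖ ^ 2 := hPform x
      have h3 : ⟪P (P x), P x⟫ ≤ ν * ‖P x‖ ^ 2 := hPform (P x)
      have h4 : 0 ≤ ⟪P x, x⟫ := hPpos x
      have h5 : 0 ≤ ⟪P (P x), P x⟫ := hPpos (P x)
      have h6 : ‖P x‖ ^ 4 ≤ (ν * ‖x‖ ^ 2) * (ν * ‖P x‖ ^ 2) := by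
        calc ‖P x‖ ^ 4 = (‖P x‖ ^ 2) ^ 2 := by ring
          _ = ⟪P x, P x⟫ ^ 2 := by rw [h1]
          _ ≤ ⟪P x, x⟫ * ⟪P (P x), P x⟫ := hcs
          _ ≤ (ν * ‖x‖ ^ 2) * (ν * ‖P x‖ ^ 2) := by
              exact mul_le_mul h2 h3 h5 (by positivity)
      have hPxpos : 0 < ‖P x‖ := norm_pos_iff.mpr hPx
      have h8 : ‖P x‖ ^ 2 ≤ ν ^ 2 * ‖x‖ ^ 2 := by
        have h7 : ‖P x‖ ^ 2 * ‖P x‖ ^ 2 ≤ (ν ^ 2 * ‖x‖ ^ 2) * ‖P x‖ ^ 2 := by nlinarith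
        exact le_of_mul_le_mul_right h7 (pow_pos hPxpos 2)
      refine le_of_pow_le_pow_left₀ two_ne_zero (mul_nonneg hνpos.le (norm_nonneg x)) ?_
      rw [mul_pow]
      exact h8
  -- main estimate: for every ε > 0, s^2 ≤ 2(‖A‖+s)ε
  have hmain : ∀ ε : ℝ, 0 < ε → s ^ 2 ≤ 2 * (‖A‖ + s) * ε := by
    intro ε hε
    set δ : ℝ := ε ^ 2 / (2 * ν) with hδdef
    have hδpos : 0 < δ := by positivity
    obtain ⟨t', ht'mem, ht'⟩ := exists_lt_of_lt_csSup hne (by linarith : s - δ < s)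
    obtain ⟨x, hx1, rfl⟩ := ht'mem
    have hCxle : ⟪C x, x⟫ ≤ s := le_csSup hbdd ⟨x, hx1, rfl⟩
    -- e := P x - ν • x
    set e : H := P x - ν • x with hedef
    have hPxx : ⟪P x, x⟫ = ⟪C x, x⟫ + t := by
      simp [hPapp, inner_add_left, real_inner_smul_left, real_inner_self_eq_norm_sq, hx1]
    have hesq : ‖e‖ ^ 2 ≤ ε ^ 2 := by
      have h1 : ‖e‖ ^ 2 = ‖P x‖ ^ 2 - 2 * (ν * ⟪P x, x⟫) + ν ^ 2 := by
        rw [hedef, norm_sub_sq_real, real_inner_smul_right, norm_smul]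
        simp [abs_of_pos hνpos, hx1]
      have h2 : ‖P x‖ ^ 2 ≤ ν ^ 2 := by
        have := hPnorm x
        rw [hx1] at this
        nlinarith [norm_nonneg (P x)]
      have h3 : ν - δ ≤ ⟪P x, x⟫ := by
        rw [hPxx]; simp only [hνdef]; linarith
      have h4 : ‖e‖ ^ 2 ≤ 2 * ν * δ := by
        rw [h1]
        nlinarith
      rw [hδdef] at h4
      calc ‖e‖ ^ 2 ≤ 2 * ν * (ε ^ 2 / (2 * ν)) := h4
        _ = ε ^ 2 := by field_simp
    have hnorme : ‖e‖ ≤ ε := by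
      nlinarith [norm_nonneg e]
    -- B x = A x + s • x + e
    have hBx : B x = (A x + s • x) + e := by
      have h1 : C x = P x - t • x := by rw [hPapp]; abel
      rw [hCBA, h1, hedef, hνdef]
      module
    have hAsx : ‖A x + s • x‖ ≤ ‖A‖ + s := by
      calc ‖A x + s • x‖ ≤ ‖A x‖ + ‖s • x‖ := norm_add_le _ _
        _ ≤ ‖A‖ * ‖x‖ + |s| * ‖x‖ := by
            gcongr
            · exact A.le_opNorm x
            · rw [norm_smul]; simp
        _ = ‖A‖ + s := by rw [hx1, abs_of_pos hspos]; ring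
    have hBsq : ‖B x‖ ^ 2 = ‖A x + s • x‖ ^ 2 + 2 * ⟪A x + s • x, e⟫ + ‖e‖ ^ 2 := by
      rw [hBx, norm_add_sq_real]
    have hAssq : ‖A x + s • x‖ ^ 2 = ‖A x‖ ^ 2 + 2 * (s * ⟪A x, x⟫) + s ^ 2 := by
      rw [norm_add_sq_real, real_inner_smul_right, norm_smul]
      simp [abs_of_pos hspos, hx1]
    have hinner : -((‖A‖ + s) * ε) ≤ ⟪A x + s • x, e⟫ := by
      have h1 : |⟪A x + s • x, e⟫| ≤ ‖A x + s • x‖ * ‖e‖ := abs_real_inner_le_norm _ _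
      have h2 : ‖A x + s • x‖ * ‖e‖ ≤ (‖A‖ + s) * ε := by
        apply mul_le_mul hAsx hnorme (norm_nonneg _)
        positivity
      have := abs_le.mp (h1.trans h2)
      linarith [this.1]
    have hBA : ‖B x‖ ^ 2 ≤ ‖A x‖ ^ 2 := by
      have := hle x
      nlinarith [norm_nonneg (B x), norm_nonneg (A x)]
    nlinarith [hApos x, sq_nonneg ‖e‖, hBsq, hAssq, hBA]
  have : s ^ 2 ≤ 0 := by
    have h := le_of_forall_pos_le_add (a := s ^ 2) (b := 0) ?_
    · exact h
    · intro ε hε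
      have h2 : 0 < ε / (2 * (‖A‖ + s) + 1) := by positivity
      have h3 := hmain _ h2
      have h4 : 2 * (‖A‖ + s) * (ε / (2 * (‖A‖ + s) + 1)) ≤ ε := by
        rw [div_eq_inv_mul]
        have hden : 0 < 2 * (‖A‖ + s) + 1 := by positivity
        rw [mul_comm ((2 * (‖A‖ + s) + 1))⁻¹ ε, ← mul_assoc]
        rw [mul_comm (2 * (‖A‖ + s)) ε, mul_assoc]
        have : 2 * (‖A‖ + s) * (2 * (‖A‖ + s) + 1)⁻¹ ≤ 1 := by
          rw [mul_inv_le_iff₀ hden]; linarith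
        nlinarith [le_of_lt hε]
      linarith
  nlinarith [hspos]

section Dop

variable (ψ : HilbertBasis ℕ ℝ H) (γ : ℕ → ℝ)

lemma memℓp_mul (hγb : ∀ j, |γ j| ≤ 1) (f : lp (fun _ : ℕ => ℝ) 2) :
    Memℓp (fun j => γ j * f j) 2 := by
  apply memℓp_gen
  have h2pos : 0 < (2 : ℝ≥0∞).toReal := by norm_num
  have hf := (lp.memℓp f).summable h2pos
  refine Summable.of_nonneg_of_le (fun j => Real.rpow_nonneg (norm_nonneg _) _)
    (fun j => ?_) hf
  apply Real.rpow_le_rpow (norm_nonneg _) _ h2pos.le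
  rw [norm_mul]
  calc ‖γ j‖ * ‖f j‖ ≤ 1 * ‖f j‖ := by
        apply mul_le_mul_of_nonneg_right _ (norm_nonneg _)
        simpa [Real.norm_eq_abs] using hγb j
    _ = ‖f j‖ := one_mul _

/-- The diagonal operator `h ↦ Σ γ_j ⟨h,ψ_j⟩ ψ_j`. -/
def Dop (hγb : ∀ j, |γ j| ≤ 1) : H →L[ℝ] H :=
  LinearMap.mkContinuous
    { toFun := fun x => ψ.repr.symm ⟨fun j => γ j * ψ.repr x j, memℓp_mul γ hγb (ψ.repr x)⟩
      map_add' := fun x y => by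
        show ψ.repr.symm _ = ψ.repr.symm _ + ψ.repr.symm _
        rw [← _root_.map_add]
        congr 1
        apply lp.ext
        funext j
        simp only [lp.coeFn_add, Pi.add_apply, map_add]
        show γ j * (ψ.repr x j + ψ.repr y j) = γ j * ψ.repr x j + γ j * ψ.repr y j
        ring
      map_smul' := fun c x => by
        simp only [RingHom.id_apply]
        show ψ.repr.symm _ = c • ψ.repr.symm _
        rw [← _root_.map_smul]
        congr 1
        apply lp.ext
        funext j
        simp only [lp.coeFn_smul, Pi.smul_apply, _root_.map_smul, smul_eq_mul]
        show γ j * (c * ψ.repr x j) = c * (γ j * ψ.repr x j)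
        ring } 1
    (by
      intro x
      simp only [LinearMap.coe_mk, AddHom.coe_mk, one_mul]
      rw [LinearIsometryEquiv.norm_map]
      have h2pos : 0 < (2 : ℝ≥0∞).toReal := by norm_num
      have hx : ‖x‖ = ‖ψ.repr x‖ := (LinearIsometryEquiv.norm_map _ _).symm
      rw [hx]
      apply lp.norm_le_of_forall_sum_le h2pos (norm_nonneg _)
      intro s
      refine le_trans ?_ (lp.sum_rpow_le_norm_rpow h2pos (ψ.repr x) s)
      apply Finset.sum_le_sum
      intro j _
      apply Real.rpow_le_rpow (norm_nonneg _) _ h2pos.le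
      show ‖γ j * ψ.repr x j‖ ≤ _
      rw [norm_mul]
      calc ‖γ j‖ * ‖ψ.repr x j‖ ≤ 1 * ‖ψ.repr x j‖ := by
            apply mul_le_mul_of_nonneg_right _ (norm_nonneg _)
            simpa [Real.norm_eq_abs] using hγb j
        _ = ‖ψ.repr x j‖ := one_mul _)

variable (hγb : ∀ j, |γ j| ≤ 1)

lemma repr_Dop (x : H) (j : ℕ) : ψ.repr (Dop ψ γ hγb x) j = γ j * ψ.repr x j := by
  show ψ.repr (ψ.repr.symm _) j = _
  rw [LinearIsometryEquiv.apply_symm_apply]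

lemma inner_Dop (x y : H) :
    ⟪Dop ψ γ hγb x, y⟫ = ∑' j, (γ j * ψ.repr x j) * ψ.repr y j := by
  have h1 : ⟪Dop ψ γ hγb x, y⟫ = ⟪ψ.repr (Dop ψ γ hγb x), ψ.repr y⟫ :=
    (ψ.repr.inner_map_map _ _).symm
  rw [h1, lp.inner_eq_tsum]
  apply tsum_congr
  intro j
  rw [repr_Dop]
  simp [starRingEnd_apply]
  ring

lemma Dop_symm (x y : H) : ⟪Dop ψ γ hγb x, y⟫ = ⟪x, Dop ψ γ hγb y⟫ := by
  rw [inner_Dop, real_inner_comm, inner_Dop]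
  apply tsum_congr
  intro j
  ring

lemma norm_Dop_sq (x : H) :
    ‖Dop ψ γ hγb x‖ ^ 2 = ∑' j, γ j ^ 2 * ψ.repr x j ^ 2 := by
  rw [← real_inner_self_eq_norm_sq, inner_Dop]
  apply tsum_congr
  intro j
  rw [repr_Dop]
  ring

end Dop

section Util

variable (ψ : HilbertBasis ℕ ℝ H)

lemma coe_repr (x : H) (j : ℕ) : (ψ.repr x : ℕ → ℝ) j = ⟪x, ψ j⟫ := by
  rw [ψ.repr_apply_apply, real_inner_comm]

lemma hasSum_coef_sq (x : H) : HasSum (fun j => ⟪x, ψ j⟫ ^ 2) (‖x‖ ^ 2) := by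
  have h := ψ.hasSum_inner_mul_inner x x
  rw [real_inner_self_eq_norm_sq] at h
  have e : (fun j => ⟪x, ψ j⟫ ^ 2) = fun i => ⟪x, ψ i⟫ * ⟪ψ i, x⟫ := by
    funext j
    rw [real_inner_comm x (ψ j)]
    ring
  rw [e]; exact h

lemma summable_coef_sq (x : H) : Summable (fun j => ⟪x, ψ j⟫ ^ 2) :=
  (hasSum_coef_sq ψ x).summable

lemma parseval (x : H) : ∑' j, ⟪x, ψ j⟫ ^ 2 = ‖x‖ ^ 2 :=
  (hasSum_coef_sq ψ x).tsum_eq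

lemma gamma_form_le (γ : ℕ → ℝ) (d : ℝ) (hd : 1 ≤ d) (hγb : ∀ j, |γ j| ≤ 1)
    (T : H →L[ℝ] H) (hsym : ∀ x y : H, ⟪T x, y⟫ = ⟪x, T y⟫)
    (hpos : ∀ h : H, h ≠ 0 → 0 < ⟪T h, h⟫)
    (hlow : ∀ h : H, (d ^ 2)⁻¹ * (∑' j, γ j ^ 2 * ⟪h, ψ j⟫ ^ 2) ≤ ‖T h‖ ^ 2) :
    ∀ h : H, (∑' j, γ j * ⟪h, ψ j⟫ ^ 2) ≤ d * ⟪T h, h⟫ := by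
  have hd0 : 0 < d := lt_of_lt_of_le one_pos hd
  have key := form_mono (d • T) (Dop ψ γ hγb)
    (by
      intro x y
      show ⟪d • T x, y⟫ = ⟪x, d • T y⟫
      rw [real_inner_smul_left, real_inner_smul_right, hsym])
    (fun x y => Dop_symm ψ γ hγb x y)
    (by
      intro x
      show 0 ≤ ⟪d • T x, x⟫
      rw [real_inner_smul_left]
      rcases eq_or_ne x 0 with rfl | hx
      · simp
      · exact mul_nonneg hd0.le (hpos x hx).le)
    (by
      intro x
      have hsq : ‖Dop ψ γ hγb x‖ ^ 2 ≤ ‖(d • T) x‖ ^ 2 := by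
        have h1 : ‖Dop ψ γ hγb x‖ ^ 2 = ∑' j, γ j ^ 2 * ⟪x, ψ j⟫ ^ 2 := by
          rw [norm_Dop_sq]
          exact tsum_congr fun j => by rw [coe_repr]
        have h2 : ‖(d • T) x‖ ^ 2 = d ^ 2 * ‖T x‖ ^ 2 := by
          show ‖d • T x‖ ^ 2 = _
          rw [norm_smul]
          simp [abs_of_pos hd0]
          ring
        rw [h1, h2]
        have h3 := hlow x
        calc ∑' j, γ j ^ 2 * ⟪x, ψ j⟫ ^ 2
            = d ^ 2 * ((d ^ 2)⁻¹ * ∑' j, γ j ^ 2 * ⟪x, ψ j⟫ ^ 2) := by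
              field_simp
          _ ≤ d ^ 2 * ‖T x‖ ^ 2 := by
              apply mul_le_mul_of_nonneg_left h3 (by positivity)
      exact le_of_pow_le_pow_left₀ two_ne_zero (norm_nonneg _) hsq)
  intro h
  have h1 := key h
  have h2 : ⟪Dop ψ γ hγb h, h⟫ = ∑' j, γ j * ⟪h, ψ j⟫ ^ 2 := by
    rw [inner_Dop]
    exact tsum_congr fun j => by rw [coe_repr]; ring
  have h3 : ⟪(d • T) h, h⟫ = d * ⟪T h, h⟫ := by
    show ⟪d • T h, h⟫ = _
    rw [real_inner_smul_left]
  rw [h2, h3] at h1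
  exact h1

end Util

section Span

variable (ψ : HilbertBasis ℕ ℝ H)

/-- the element of the span with coefficient vector `v` -/
def hvec (m : ℕ) (v : Fin m → ℝ) : H := ∑ j : Fin m, v j • ψ (j : ℕ)

lemma coef_hvec (m : ℕ) (v : Fin m → ℝ) (j : ℕ) :
    ⟪hvec ψ m v, ψ j⟫ = if h : j < m then v ⟨j, h⟩ else 0 := by
  have horth := orthonormal_iff_ite.mp ψ.orthonormal
  rw [hvec, sum_inner]
  by_cases h : j < m
  · rw [dif_pos h]
    rw [Finset.sum_eq_single (⟨j, h⟩ : Fin m)]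
    · rw [real_inner_smul_left, horth]
      simp
    · intro k _ hk
      rw [real_inner_smul_left, horth]
      have : (k : ℕ) ≠ j := by
        intro hc
        apply hk
        apply Fin.ext
        simp [hc]
      simp [this]
    · intro hc
      exact absurd (Finset.mem_univ _) hc
  · rw [dif_neg h]
    apply Finset.sum_eq_zero
    intro k _
    rw [real_inner_smul_left, horth]
    have : (k : ℕ) ≠ j := by
      intro hc
      exact h (hc ▸ k.isLt)
    simp [this]

lemma Tspan_coef (T : H →L[ℝ] H) (m : ℕ) (p : Fin m → ℝ) (j : Fin m) :
    ⟪T (hvec ψ m p), ψ (j : ℕ)⟫ = (opMat ψ T m *ᵥ p) j := by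
  rw [hvec, _root_.map_sum, sum_inner, Matrix.mulVec, dotProduct]
  apply Finset.sum_congr rfl
  intro k _
  rw [_root_.map_smul, real_inner_smul_left, opMat]
  show p k * ⟪T (ψ (k : ℕ)), ψ (j : ℕ)⟫ = ⟪ψ (j : ℕ), T (ψ (k : ℕ))⟫ * p k
  rw [real_inner_comm]
  ring

lemma form_hvec (T : H →L[ℝ] H) (m : ℕ) (p w : Fin m → ℝ) :
    ⟪T (hvec ψ m p), hvec ψ m w⟫ = w ⬝ᵥ (opMat ψ T m *ᵥ p) := by
  nth_rewrite 2 [hvec]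
  rw [inner_sum, dotProduct]
  apply Finset.sum_congr rfl
  intro k _
  rw [real_inner_smul_right, ← Tspan_coef]

lemma tsum_weight_hvec (g : ℕ → ℝ) (m : ℕ) (v : Fin m → ℝ) :
    ∑' j, g j * ⟪hvec ψ m v, ψ j⟫ ^ 2 = ∑ j : Fin m, g (j : ℕ) * v j ^ 2 := by
  rw [tsum_eq_sum (s := Finset.range m) ?h0]
  case h0 =>
    intro j hj
    rw [coef_hvec, dif_neg (by simpa using hj)]
    ring
  rw [← Fin.sum_univ_eq_sum_range (fun j => g j * ⟪hvec ψ m v, ψ j⟫ ^ 2) m]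
  apply Finset.sum_congr rfl
  intro k _
  rw [coef_hvec, dif_pos k.isLt]

end Span

section MatrixPart

lemma mat_inv_form {m : ℕ} (A : Matrix (Fin m) (Fin m) ℝ) (hinv : IsUnit A.det)
    (g : Fin m → ℝ) (d gmin : ℝ) (hd : 0 < d) (hgmin : 0 < gmin)
    (hgpos : ∀ j, 0 < g j) (hge : ∀ j, gmin ≤ g j)
    (hform : ∀ w : Fin m → ℝ, (∑ j, g j * w j ^ 2) ≤ d * (w ⬝ᵥ (A *ᵥ w)))
    (c : Fin m → ℝ) :
    c ⬝ᵥ (A⁻¹ *ᵥ c) ≤ d / gmin * ∑ j, c j ^ 2 := by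
  set u : Fin m → ℝ := A⁻¹ *ᵥ c with hu
  have hAu : A *ᵥ u = c := by
    rw [hu, Matrix.mulVec_mulVec, Matrix.mul_nonsing_inv _ hinv, Matrix.one_mulVec]
  have h2 : (∑ j, g j * u j ^ 2) ≤ d * (u ⬝ᵥ c) := by
    have := hform u
    rwa [hAu] at this
  have hpt : ∀ j : Fin m, 2 * d * (u j * c j) - g j * u j ^ 2 ≤ d ^ 2 * c j ^ 2 / gmin := by
    intro j
    have step1 : 2 * d * (u j * c j) - g j * u j ^ 2 ≤ d ^ 2 * c j ^ 2 / g j := by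
      rw [le_div_iff₀ (hgpos j)]
      nlinarith [sq_nonneg (d * c j - g j * u j), hgpos j]
    refine step1.trans ?_
    apply div_le_div_of_nonneg_left (by positivity) hgmin (hge j)
  have hsum : 2 * d * (u ⬝ᵥ c) - (∑ j, g j * u j ^ 2) ≤ d ^ 2 / gmin * ∑ j, c j ^ 2 := by
    have hs := Finset.sum_le_sum (s := Finset.univ) (fun j _ => hpt j)
    rw [dotProduct]
    calc 2 * d * (∑ j, u j * c j) - (∑ j, g j * u j ^ 2)
        = ∑ j, (2 * d * (u j * c j) - g j * u j ^ 2) := by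
          rw [Finset.sum_sub_distrib, Finset.mul_sum]
      _ ≤ ∑ j, d ^ 2 * c j ^ 2 / gmin := hs
      _ = d ^ 2 / gmin * ∑ j, c j ^ 2 := by
          rw [Finset.mul_sum]
          apply Finset.sum_congr rfl
          intro j _
          ring
  have hcu : c ⬝ᵥ (A⁻¹ *ᵥ c) = u ⬝ᵥ c := by
    rw [← hu, dotProduct_comm]
  rw [hcu]
  have hd2 : d * (u ⬝ᵥ c) ≤ d * (d / gmin * ∑ j, c j ^ 2) := by
    have heq : d * (d / gmin * ∑ j, c j ^ 2) = d ^ 2 / gmin * ∑ j, c j ^ 2 := by ring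
    rw [heq]
    linarith
  exact le_of_mul_le_mul_left hd2 hd

end MatrixPart


set_option maxHeartbeats 2000000 in
/-- Lemma B.1, (B.5): `‖φ_m‖_β² ≤ 34 d⁸ r` and
`‖T^{1/2}(φ − φ_m)‖² ≤ 34 d⁹ r γ_m/β_m`, where `T^{1/2}` is the positive
square root of `T` (characterized below as any positive self-adjoint `S` with
`S ∘ S = T`). -/
theorem stmt_8 (ψ : HilbertBasis ℕ ℝ H) (γ : ℕ → ℝ) (d : ℝ) (hd : 1 ≤ d)
    (hγ1 : γ 0 = 1) (hγpos : ∀ j, 0 < γ j) (hγanti : Antitone γ)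
    (hγ0 : Filter.Tendsto γ Filter.atTop (nhds 0)) (hγsum : Summable γ)
    (β : ℕ → ℝ) (hβ1 : β 0 = 1) (hβmono : Monotone β)
    (hβ0 : Filter.Tendsto (fun j => (β j)⁻¹) Filter.atTop (nhds 0)) (r : ℝ) (hr : 0 < r)
    (T : H →L[ℝ] H) (hT : memG ψ γ d T)
    (φ : H) (hφ : memF ψ β r φ) :
    ∀ m : ℕ, 1 ≤ m →
      wnorm2 ψ β (galerkin ψ T φ m) ≤ 34 * d ^ 8 * r ∧
      ∀ S : H →L[ℝ] H, (∀ x y : H, ⟪S x, y⟫ = ⟪x, S y⟫) →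
        (∀ h : H, 0 ≤ ⟪S h, h⟫) → S.comp S = T →
        ‖S (φ - galerkin ψ T φ m)‖ ^ 2 ≤ 34 * d ^ 9 * r * (γ (m - 1) / β (m - 1)) := by
  obtain ⟨hsym, hpos, _hnuc, hsand⟩ := hT
  have hd0 : 0 < d := lt_of_lt_of_le one_pos hd
  have hγb : ∀ j, |γ j| ≤ 1 := fun j => by
    rw [abs_of_pos (hγpos j)]
    simpa [hγ1] using hγanti (Nat.zero_le j)
  have hβone : ∀ j, (1 : ℝ) ≤ β j := fun j => by
    simpa [hβ1] using hβmono (Nat.zero_le j)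
  have hβpos : ∀ j, (0 : ℝ) < β j := fun j => lt_of_lt_of_le one_pos (hβone j)
  have hglobal := gamma_form_le ψ γ d hd hγb T hsym hpos (fun h => (hsand h).1)
  intro m hm
  obtain ⟨M, rfl⟩ : ∃ M, m = M + 1 := ⟨m - 1, (Nat.succ_pred_eq_of_pos hm).symm⟩
  -- abbreviations
  set gm : ℝ := γ M with hgmdef
  set bm : ℝ := β M with hbmdef
  have hgm : 0 < gm := hγpos M
  have hbm1 : (1 : ℝ) ≤ bm := hβone M
  have hbm : 0 < bm := lt_of_lt_of_le one_pos hbm1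
  set p : Fin (M + 1) → ℝ := fun j => ⟪φ, ψ (j : ℕ)⟫ with hpdef
  set ρ : H := φ - hvec ψ (M + 1) p with hρdef
  set A : Matrix (Fin (M + 1)) (Fin (M + 1)) ℝ := opMat ψ T (M + 1) with hAdef
  set c : Fin (M + 1) → ℝ := fun j => ⟪T ρ, ψ (j : ℕ)⟫ with hcdef
  set u : Fin (M + 1) → ℝ := A⁻¹ *ᵥ c with hudef
  -- the quadratic form bound for the Galerkin matrix
  have hform : ∀ w : Fin (M + 1) → ℝ,
      (∑ j : Fin (M + 1), γ (j : ℕ) * w j ^ 2) ≤ d * (w ⬝ᵥ (A *ᵥ w)) := by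
    intro w
    have h1 := hglobal (hvec ψ (M + 1) w)
    rw [tsum_weight_hvec, form_hvec] at h1
    exact h1
  -- the Galerkin matrix is positive definite
  have hherm : A.IsHermitian := by
    rw [Matrix.IsHermitian]
    ext j k
    simp only [Matrix.conjTranspose_apply, hAdef, opMat, Matrix.of_apply, star_trivial]
    rw [← hsym, real_inner_comm]
  have hvne : ∀ v : Fin (M + 1) → ℝ, v ≠ 0 → hvec ψ (M + 1) v ≠ 0 := by
    intro v hv hzero
    apply hv
    funext j
    have h1 := coef_hvec ψ (M + 1) v (j : ℕ)
    rw [dif_pos j.isLt] at h1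
    rw [hzero] at h1
    simp only [inner_zero_left] at h1
    rw [show (⟨(j : ℕ), j.isLt⟩ : Fin (M + 1)) = j from Fin.eta j j.isLt] at h1
    exact h1.symm
  have hPD : A.PosDef := by
    rw [Matrix.posDef_iff_dotProduct_mulVec]
    constructor
    · exact hherm
    · intro v hv
      have h1 : 0 < ⟪T (hvec ψ (M + 1) v), hvec ψ (M + 1) v⟫ :=
        hpos _ (hvne v hv)
      rw [form_hvec] at h1
      simpa using h1
  have hdet : IsUnit A.det := isUnit_iff_ne_zero.mpr hPD.det_pos.ne'
  have hAu : A *ᵥ u = c := by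
    rw [hudef, Matrix.mulVec_mulVec, Matrix.mul_nonsing_inv _ hdet, Matrix.one_mulVec]
  -- coefficients of ρ
  have hcoefρ0 : ∀ j : ℕ, j < M + 1 → ⟪ρ, ψ j⟫ = 0 := by
    intro j hj
    rw [hρdef, inner_sub_left, coef_hvec, dif_pos hj]
    show ⟪φ, ψ j⟫ - p ⟨j, hj⟩ = 0
    rw [hpdef]
    simp
  have hcoefρ : ∀ j : ℕ, M + 1 ≤ j → ⟪ρ, ψ j⟫ = ⟪φ, ψ j⟫ := by
    intro j hj
    rw [hρdef, inner_sub_left, coef_hvec, dif_neg (not_lt.mpr hj), sub_zero]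
  have hsplit : φ = hvec ψ (M + 1) p + ρ := by rw [hρdef]; abel
  -- decomposition of the Galerkin coefficients
  have hbdecomp : gvec ψ T φ (M + 1) = A *ᵥ p + c := by
    funext j
    show ⟪T φ, ψ (j : ℕ)⟫ = _
    conv_lhs => rw [hsplit]
    rw [_root_.map_add, inner_add_left, Tspan_coef]
    rfl
  have hgal : galCoef ψ T φ (M + 1) = fun j => p j + u j := by
    funext j
    rw [galCoef, hbdecomp, ← hAdef, Matrix.mulVec_add, Matrix.mulVec_mulVec,
      Matrix.nonsing_inv_mul _ hdet, Matrix.one_mulVec]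
    rfl
  -- tail bounds
  have HC1 : (∑' j, γ j ^ 2 * ⟪ρ, ψ j⟫ ^ 2) ≤ gm ^ 2 / bm * r := by
    have hle : ∀ j, γ j ^ 2 * ⟪ρ, ψ j⟫ ^ 2 ≤ gm ^ 2 / bm * (β j * ⟪φ, ψ j⟫ ^ 2) := by
      intro j
      by_cases hj : j < M + 1
      · rw [hcoefρ0 j hj]
        have : γ j ^ 2 * 0 ^ 2 = 0 := by ring
        rw [this]
        have hb := hβpos j
        positivity
      · push_neg at hj
        rw [hcoefρ j hj]
        have hMj : M ≤ j := Nat.le_of_succ_le hj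
        have h1 : γ j ≤ gm := hγanti hMj
        have h2 : bm ≤ β j := hβmono hMj
        have h3 : γ j ^ 2 ≤ gm ^ 2 / bm * β j := by
          rw [div_mul_eq_mul_div, le_div_iff₀ hbm]
          have hγj := hγpos j
          have hsq : γ j ^ 2 ≤ gm ^ 2 := by nlinarith
          calc γ j ^ 2 * bm ≤ gm ^ 2 * bm := by nlinarith
            _ ≤ gm ^ 2 * β j := by nlinarith [sq_nonneg gm]
        calc γ j ^ 2 * ⟪φ, ψ j⟫ ^ 2 ≤ (gm ^ 2 / bm * β j) * ⟪φ, ψ j⟫ ^ 2 :=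
              mul_le_mul_of_nonneg_right h3 (sq_nonneg _)
          _ = gm ^ 2 / bm * (β j * ⟪φ, ψ j⟫ ^ 2) := by ring
    have hsum2 : Summable (fun j => gm ^ 2 / bm * (β j * ⟪φ, ψ j⟫ ^ 2)) :=
      hφ.1.mul_left _
    have hs1 : Summable (fun j => γ j ^ 2 * ⟪ρ, ψ j⟫ ^ 2) :=
      Summable.of_nonneg_of_le (fun j => by positivity) hle hsum2
    calc (∑' j, γ j ^ 2 * ⟪ρ, ψ j⟫ ^ 2)
        ≤ ∑' j, gm ^ 2 / bm * (β j * ⟪φ, ψ j⟫ ^ 2) := Summable.tsum_le_tsum hle hs1 hsum2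
      _ = gm ^ 2 / bm * ∑' j, β j * ⟪φ, ψ j⟫ ^ 2 := tsum_mul_left
      _ ≤ gm ^ 2 / bm * r := by
          apply mul_le_mul_of_nonneg_left hφ.2 (by positivity)
  have HTρ : ‖T ρ‖ ^ 2 ≤ d ^ 2 * (gm ^ 2 / bm * r) :=
    le_trans (hsand ρ).2 (mul_le_mul_of_nonneg_left HC1 (by positivity))
  have HC2 : ‖ρ‖ ^ 2 ≤ bm⁻¹ * r := by
    have hle : ∀ j, ⟪ρ, ψ j⟫ ^ 2 ≤ bm⁻¹ * (β j * ⟪φ, ψ j⟫ ^ 2) := by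
      intro j
      by_cases hj : j < M + 1
      · rw [hcoefρ0 j hj]
        have hb := hβpos j
        have : (0:ℝ) ^ 2 = 0 := by ring
        rw [this]
        positivity
      · push_neg at hj
        rw [hcoefρ j hj]
        have h2 : bm ≤ β j := hβmono (Nat.le_of_succ_le hj)
        have h3 : (1 : ℝ) ≤ bm⁻¹ * β j := by
          rw [← div_eq_inv_mul, le_div_iff₀ hbm]
          simpa using h2
        calc ⟪φ, ψ j⟫ ^ 2 = 1 * ⟪φ, ψ j⟫ ^ 2 := by ring
          _ ≤ (bm⁻¹ * β j) * ⟪φ, ψ j⟫ ^ 2 := mul_le_mul_of_nonneg_right h3 (sq_nonneg _)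
          _ = bm⁻¹ * (β j * ⟪φ, ψ j⟫ ^ 2) := by ring
    have hsum2 : Summable (fun j => bm⁻¹ * (β j * ⟪φ, ψ j⟫ ^ 2)) := hφ.1.mul_left _
    calc ‖ρ‖ ^ 2 = ∑' j, ⟪ρ, ψ j⟫ ^ 2 := (parseval ψ ρ).symm
      _ ≤ ∑' j, bm⁻¹ * (β j * ⟪φ, ψ j⟫ ^ 2) :=
          Summable.tsum_le_tsum hle (summable_coef_sq ψ ρ) hsum2
      _ = bm⁻¹ * ∑' j, β j * ⟪φ, ψ j⟫ ^ 2 := tsum_mul_left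
      _ ≤ bm⁻¹ * r := mul_le_mul_of_nonneg_left hφ.2 (by positivity)
  have Hc2sum : (∑ j : Fin (M + 1), c j ^ 2) ≤ ‖T ρ‖ ^ 2 := by
    rw [← parseval ψ (T ρ)]
    rw [show (∑ j : Fin (M + 1), c j ^ 2)
        = ∑ j ∈ Finset.range (M + 1), ⟪T ρ, ψ j⟫ ^ 2 from
      Fin.sum_univ_eq_sum_range (fun j => ⟪T ρ, ψ j⟫ ^ 2) (M + 1)]
    exact Summable.sum_le_tsum _ (fun j _ => sq_nonneg _) (summable_coef_sq ψ (T ρ))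
  have Hinv : c ⬝ᵥ (A⁻¹ *ᵥ c) ≤ d / gm * ∑ j, c j ^ 2 :=
    mat_inv_form A hdet (fun j => γ (j : ℕ)) d gm hd0 hgm (fun j => hγpos _)
      (fun j => hγanti (Nat.lt_succ_iff.mp j.isLt)) hform c
  have Hcore : c ⬝ᵥ (A⁻¹ *ᵥ c) ≤ d ^ 3 * (gm * r / bm) := by
    calc c ⬝ᵥ (A⁻¹ *ᵥ c) ≤ d / gm * ∑ j, c j ^ 2 := Hinv
      _ ≤ d / gm * (d ^ 2 * (gm ^ 2 / bm * r)) := by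
          apply mul_le_mul_of_nonneg_left (le_trans Hc2sum HTρ) (by positivity)
      _ = d ^ 3 * (gm * r / bm) := by
          field_simp
  have Huc : u ⬝ᵥ (A *ᵥ u) = c ⬝ᵥ (A⁻¹ *ᵥ c) := by
    rw [hAu, ← hudef, dotProduct_comm]
  constructor
  · -- Part 1
    have hwnorm : wnorm2 ψ β (galerkin ψ T φ (M + 1))
        = ∑ j : Fin (M + 1), β (j : ℕ) * (p j + u j) ^ 2 := by
      have hge : galerkin ψ T φ (M + 1)
          = hvec ψ (M + 1) (fun j => p j + u j) := by
        rw [galerkin, hgal, hvec]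
      rw [wnorm2, hge, tsum_weight_hvec]
    rw [hwnorm]
    have S1 : (∑ j : Fin (M + 1), β (j : ℕ) * p j ^ 2) ≤ r := by
      rw [show (∑ j : Fin (M + 1), β (j : ℕ) * p j ^ 2)
          = ∑ j ∈ Finset.range (M + 1), β j * ⟪φ, ψ j⟫ ^ 2 from
        Fin.sum_univ_eq_sum_range (fun j => β j * ⟪φ, ψ j⟫ ^ 2) (M + 1)]
      exact le_trans (Summable.sum_le_tsum _ (fun j _ => mul_nonneg (hβpos j).le (sq_nonneg _)) hφ.1) hφ.2
    have S2 : (∑ j : Fin (M + 1), γ (j : ℕ) * u j ^ 2) ≤ d * (d ^ 3 * (gm * r / bm)) := by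
      calc (∑ j : Fin (M + 1), γ (j : ℕ) * u j ^ 2) ≤ d * (u ⬝ᵥ (A *ᵥ u)) := hform u
        _ = d * (c ⬝ᵥ (A⁻¹ *ᵥ c)) := by rw [Huc]
        _ ≤ d * (d ^ 3 * (gm * r / bm)) := mul_le_mul_of_nonneg_left Hcore hd0.le
    have S3 : (∑ j : Fin (M + 1), β (j : ℕ) * u j ^ 2)
        ≤ bm / gm * ∑ j : Fin (M + 1), γ (j : ℕ) * u j ^ 2 := by
      rw [Finset.mul_sum]
      apply Finset.sum_le_sum
      intro j _
      have hj : (j : ℕ) ≤ M := Nat.lt_succ_iff.mp j.isLt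
      have h1 : β (j : ℕ) ≤ bm := hβmono hj
      have h2 : gm ≤ γ (j : ℕ) := hγanti hj
      have h3 : β (j : ℕ) ≤ bm / gm * γ (j : ℕ) := by
        rw [div_mul_eq_mul_div, le_div_iff₀ hgm]
        nlinarith [hγpos (j : ℕ)]
      calc β (j : ℕ) * u j ^ 2 ≤ (bm / gm * γ (j : ℕ)) * u j ^ 2 :=
            mul_le_mul_of_nonneg_right h3 (sq_nonneg _)
        _ = bm / gm * (γ (j : ℕ) * u j ^ 2) := by ring
    have S4 : (∑ j : Fin (M + 1), β (j : ℕ) * u j ^ 2) ≤ d ^ 4 * r := by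
      calc (∑ j : Fin (M + 1), β (j : ℕ) * u j ^ 2)
          ≤ bm / gm * ∑ j : Fin (M + 1), γ (j : ℕ) * u j ^ 2 := S3
        _ ≤ bm / gm * (d * (d ^ 3 * (gm * r / bm))) :=
            mul_le_mul_of_nonneg_left S2 (by positivity)
        _ = d ^ 4 * r := by field_simp
    have Stot : (∑ j : Fin (M + 1), β (j : ℕ) * (p j + u j) ^ 2)
        ≤ 2 * (∑ j : Fin (M + 1), β (j : ℕ) * p j ^ 2)
          + 2 * (∑ j : Fin (M + 1), β (j : ℕ) * u j ^ 2) := by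
      rw [Finset.mul_sum, Finset.mul_sum, ← Finset.sum_add_distrib]
      apply Finset.sum_le_sum
      intro j _
      have hb := (hβpos (j : ℕ)).le
      nlinarith [sq_nonneg (p j - u j), sq_nonneg (p j + u j)]
    have hd4 : (1 : ℝ) ≤ d ^ 4 := one_le_pow₀ hd
    have hd48 : d ^ 4 ≤ d ^ 8 := pow_le_pow_right₀ hd (by norm_num)
    nlinarith [S1, S4, Stot, hr]
  · -- Part 2
    intro S hSsym hSpos hSS
    have hSapp : ∀ x : H, S (S x) = T x := by
      intro x
      rw [← ContinuousLinearMap.comp_apply, hSS]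
    have hgal_eq : galerkin ψ T φ (M + 1)
        = hvec ψ (M + 1) p + hvec ψ (M + 1) u := by
      rw [galerkin, hgal]
      simp only [hvec]
      rw [← Finset.sum_add_distrib]
      apply Finset.sum_congr rfl
      intro j _
      rw [add_smul]
    have he : φ - galerkin ψ T φ (M + 1) = ρ - hvec ψ (M + 1) u := by
      rw [hgal_eq, hρdef]
      abel
    have hSρ : ‖S ρ‖ ^ 2 = ⟪T ρ, ρ⟫ := by
      rw [← real_inner_self_eq_norm_sq, hSsym ρ (S ρ), hSapp, real_inner_comm]
    have hSu : ‖S (hvec ψ (M + 1) u)‖ ^ 2 = c ⬝ᵥ (A⁻¹ *ᵥ c) := by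
      rw [← real_inner_self_eq_norm_sq, hSsym _ (S _), hSapp, real_inner_comm,
        form_hvec, Huc]
    have hρTpos : 0 ≤ ⟪T ρ, ρ⟫ := by
      rcases eq_or_ne ρ 0 with hz | hz
      · rw [hz]; simp
      · exact (hpos ρ hz).le
    have hTρρ : ⟪T ρ, ρ⟫ ≤ d * (gm * r / bm) := by
      have hq : ⟪T ρ, ρ⟫ ^ 2 ≤ (d * (gm * r / bm)) ^ 2 := by
        have habs : |⟪T ρ, ρ⟫| ≤ ‖T ρ‖ * ‖ρ‖ := abs_real_inner_le_norm _ _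
        have h1 : ⟪T ρ, ρ⟫ ^ 2 ≤ ‖T ρ‖ ^ 2 * ‖ρ‖ ^ 2 := by
          have := pow_le_pow_left₀ (abs_nonneg _) habs 2
          rw [sq_abs] at this
          calc ⟪T ρ, ρ⟫ ^ 2 ≤ (‖T ρ‖ * ‖ρ‖) ^ 2 := this
            _ = ‖T ρ‖ ^ 2 * ‖ρ‖ ^ 2 := by ring
        have h2 : ‖T ρ‖ ^ 2 * ‖ρ‖ ^ 2 ≤ (d ^ 2 * (gm ^ 2 / bm * r)) * (bm⁻¹ * r) :=
          mul_le_mul HTρ HC2 (sq_nonneg _) (by positivity)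
        have h3 : (d ^ 2 * (gm ^ 2 / bm * r)) * (bm⁻¹ * r) = (d * (gm * r / bm)) ^ 2 := by
          field_simp
        linarith [h1, h2, h3.le, h3.ge]
      exact le_of_pow_le_pow_left₀ two_ne_zero (by positivity) hq
    have htri : ‖S (φ - galerkin ψ T φ (M + 1))‖
        ≤ ‖S ρ‖ + ‖S (hvec ψ (M + 1) u)‖ := by
      rw [he, map_sub]
      exact norm_sub_le _ _
    have hsq : ‖S (φ - galerkin ψ T φ (M + 1))‖ ^ 2
        ≤ 2 * ‖S ρ‖ ^ 2 + 2 * ‖S (hvec ψ (M + 1) u)‖ ^ 2 := by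
      have h1 := pow_le_pow_left₀ (norm_nonneg _) htri 2
      nlinarith [sq_nonneg (‖S ρ‖ - ‖S (hvec ψ (M + 1) u)‖)]
    have hMm : (M + 1) - 1 = M := by omega
    rw [hMm]
    have hq0 : 0 < gm * r / bm := by positivity
    have hd39 : d ^ 3 ≤ d ^ 9 := pow_le_pow_right₀ hd (by norm_num)
    have hd19 : d ≤ d ^ 9 := by
      calc d = d ^ 1 := (pow_one d).symm
        _ ≤ d ^ 9 := pow_le_pow_right₀ hd (by norm_num)
    have hgoal : 34 * d ^ 9 * r * (gm / bm) = 34 * d ^ 9 * (gm * r / bm) := by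
      ring
    rw [hgoal]
    have hb1 : ‖S ρ‖ ^ 2 ≤ d * (gm * r / bm) := by rw [hSρ]; exact hTρρ
    have hb2 : ‖S (hvec ψ (M + 1) u)‖ ^ 2 ≤ d ^ 3 * (gm * r / bm) := by
      rw [hSu]; exact Hcore
    nlinarith [hq0, hd0]


end
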